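/- arXiv:2010.01938 — 2 statements merged into one kernel-verified Lean document; each statement's English description precedes it below -/
import Mathlib

section
/- ∈*-Union conclusion: for all x, u, if x is a set and the E-elements of u are exactly the objects that are E-elements of some E-element of x that is a set (i.e., ∀ y, E y u ↔ ∃ z, E z x ∧ set(z) ∧ E y z), then u is a set and ∀ y, y ∈* u ↔ ∃ z, z ∈* x ∧ y ∈* z. -/
/-- Coextensionality: `x =* y` iff `x` and `y` have the same `E`-elements. -/
def coext {α : Type*} (E : α → α → Prop) (x y : α) : Prop :=
  ∀ z, E z x ↔ E z y

/-- `set(y)`: membership in `y` respects coextensionality. -/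
def isSet {α : Type*} (E : α → α → Prop) (y : α) : Prop :=
  ∀ m n, coext E m n → (E m y ↔ E n y)

/-- `x ∈* y` iff `y` is a set and `E x y`. -/
def memStar {α : Type*} (E : α → α → Prop) (x y : α) : Prop :=
  isSet E y ∧ E x y

/-- `∈*`-Union conclusion: if `x` is a set and the `E`-elements of `u` are
exactly the `E`-elements of the set-elements of `x`, then `u` is a set and is
an `∈*`-union of `x`. -/
theorem union_star {α : Type*} (E : α → α → Prop) :
    ∀ x u, isSet E x →
      (∀ y, E y u ↔ ∃ z, E z x ∧ isSet E z ∧ E y z) →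
      isSet E u ∧ (∀ y, memStar E y u ↔ ∃ z, memStar E z x ∧ memStar E y z) := by
  intro x u hx hu
  have hsu : isSet E u := by
    intro m n hmn
    constructor
    · intro hm
      obtain ⟨z, hzx, hz, hmz⟩ := (hu m).mp hm
      exact (hu n).mpr ⟨z, hzx, hz, (hz m n hmn).mp hmz⟩
    · intro hn
      obtain ⟨z, hzx, hz, hnz⟩ := (hu n).mp hn
      exact (hu m).mpr ⟨z, hzx, hz, (hz m n hmn).mpr hnz⟩
  refine ⟨hsu, fun y => ⟨?_, ?_⟩⟩
  · rintro ⟨-, hyu⟩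
    obtain ⟨z, hzx, hz, hyz⟩ := (hu y).mp hyu
    exact ⟨z, ⟨hx, hzx⟩, hz, hyz⟩
  · rintro ⟨z, ⟨-, hzx⟩, hz, hyz⟩
    exact ⟨hsu, (hu y).mpr ⟨z, hzx, hz, hyz⟩⟩
end

section
/- ∈*-Separation conclusion: let φ : α → Prop be a predicate that respects =* (i.e., for all x y, x =* y implies (φ x ↔ φ y)). For all A and S, if the E-elements of S are exactly the objects y with y ∈* A and φ y (i.e., ∀ y, E y S ↔ (y ∈* A ∧ φ y)), then S is a set and ∀ y, y ∈* S ↔ (y ∈* A ∧ φ y). -/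
/-- `∈*`-Separation conclusion: if `φ` respects `=*` and the `E`-elements of
`S` are exactly the `y` with `y ∈* A` and `φ y`, then `S` is a set and its
`∈*`-elements are exactly those `y`. -/
theorem separation_star {α : Type*} (E : α → α → Prop) (φ : α → Prop)
    (hφ : ∀ x y, coext E x y → (φ x ↔ φ y)) :
    ∀ A S, (∀ y, E y S ↔ (memStar E y A ∧ φ y)) →
      isSet E S ∧ (∀ y, memStar E y S ↔ (memStar E y A ∧ φ y)) := by
  intro A S hS
  have hset : isSet E S := by
    intro m n hmn
    rw [hS m, hS n]
    constructor
    · rintro ⟨⟨hA, hmA⟩, hph⟩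
      exact ⟨⟨hA, (hA m n hmn).mp hmA⟩, (hφ m n hmn).mp hph⟩
    · rintro ⟨⟨hA, hnA⟩, hph⟩
      exact ⟨⟨hA, (hA m n hmn).mpr hnA⟩, (hφ m n hmn).mpr hph⟩
  refine ⟨hset, fun y => ?_⟩
  constructor
  · rintro ⟨_, hE⟩; exact (hS y).mp hE
  · intro h; exact ⟨hset, (hS y).mpr h⟩
end
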